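/- arXiv:1907.06054 — 5 statements merged into one kernel-verified Lean document; each statement's English description precedes it below -/
import Mathlib

section
/- For every δ₀ ∈ (0,1) there exists a constant c > 0 such that the following holds for all integers n, N, s with 2 ≤ s and s/N < 1/5: if A is an n×N random matrix with i.i.d. standard Gaussian entries, Φ = A/√n, and P(δ_s(Φ) ≤ δ₀) ≥ 1/2, then n ≥ c·s·log(N/s). In other words, the minimal number of Gaussian random measurements enforcing the restricted isometry property of order s with constant δ₀ is Ω(s·log(N/s)). -/
open MeasureTheory ProbabilityTheory

/-- Law of an `n × N` matrix with i.i.d. standard Gaussian entries. -/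
noncomputable def gaussianMatrixMeasure (n N : ℕ) : Measure (Fin n → Fin N → ℝ) :=
  Measure.pi fun _ => Measure.pi fun _ => gaussianReal 0 1

/-- The set Ψ_s of `s`-sparse unit vectors in `ℝ^N`. -/
def sparseUnitVecs (N s : ℕ) : Set (Fin N → ℝ) :=
  {x | (∑ j, x j ^ 2) = 1 ∧ (Finset.univ.filter fun j => x j ≠ 0).card ≤ s}

/-- `‖A x‖²` for `A : ℝ^{n×N}`, `x : ℝ^N`. -/
noncomputable def normSqMulVec {n N : ℕ} (A : Fin n → Fin N → ℝ) (x : Fin N → ℝ) : ℝ :=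
  ∑ i, (∑ j, A i j * x j) ^ 2

/-- The upper RIP constant `δ_s^+(A) = sup_{x ∈ Ψ_s} ‖Ax‖² − 1`. -/
noncomputable def ripPlus (n N s : ℕ) (A : Fin n → Fin N → ℝ) : ℝ :=
  sSup (normSqMulVec A '' sparseUnitVecs N s) - 1

/-- The lower RIP constant `δ_s^-(A) = 1 − inf_{x ∈ Ψ_s} ‖Ax‖²`. -/
noncomputable def ripMinus (n N s : ℕ) (A : Fin n → Fin N → ℝ) : ℝ :=
  1 - sInf (normSqMulVec A '' sparseUnitVecs N s)

/-- The RIP constant `δ_s = max(δ_s^+, δ_s^-)`. -/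
noncomputable def ripConst (n N s : ℕ) (A : Fin n → Fin N → ℝ) : ℝ :=
  max (ripPlus n N s A) (ripMinus n N s A)

/-! ### Auxiliary lemmas -/

section Aux

open Finset Metric

lemma nat_choose_le_two_pow (t h : ℕ) : Nat.choose t h ≤ 2 ^ t := by
  rcases le_or_gt h t with hle | hlt
  · calc Nat.choose t h ≤ ∑ m ∈ range (t+1), Nat.choose t m :=
        Finset.single_le_sum (fun i _ => Nat.zero_le _) (by simp [Nat.lt_succ_of_le hle])
      _ = 2 ^ t := Nat.sum_range_choose t
  · rw [Nat.choose_eq_zero_of_lt hlt]; exact Nat.zero_le _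

/-- agreement count of two codewords -/
def agree {t b : ℕ} (f g : Fin t → Fin b) : ℕ :=
  (Finset.univ.filter fun i => f i = g i).card

lemma agree_comm {t b : ℕ} (f g : Fin t → Fin b) : agree f g = agree g f := by
  unfold agree
  congr 1
  apply Finset.filter_congr
  intro i _
  simp [eq_comm]

/-- Gilbert–Varshamov style greedy bound: a maximal code with pairwise agreement `< h`
has at least `b^h / choose t h` elements. -/
lemma code_exists (t b h : ℕ) (hb : 1 ≤ b) (hht : h ≤ t) :
    ∃ F : Finset (Fin t → Fin b),
      (∀ f ∈ F, ∀ g ∈ F, f ≠ g → agree f g < h) ∧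
      b ^ h ≤ F.card * Nat.choose t h := by
  classical
  set Good : Finset (Fin t → Fin b) → Prop :=
    fun F => ∀ f ∈ F, ∀ g ∈ F, f ≠ g → agree f g < h with hGood
  have hne : ((Finset.univ : Finset (Finset (Fin t → Fin b))).filter Good).Nonempty := by
    refine ⟨∅, ?_⟩
    simp [hGood]
  obtain ⟨F, hFmem, hFmax⟩ := Finset.exists_max_image _ Finset.card hne
  have hFgood : Good F := (Finset.mem_filter.mp hFmem).2
  refine ⟨F, hFgood, ?_⟩
  have hcover : ∀ g : Fin t → Fin b, ∃ f ∈ F, h ≤ agree f g := by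
    intro g
    by_contra hcon
    push_neg at hcon
    have hgF : g ∉ F := by
      intro hgF
      have h1 := hcon g hgF
      have h2 : agree g g = t := by
        unfold agree; simp
      omega
    have hgood' : Good (insert g F) := by
      intro f₁ hf₁ f₂ hf₂ hne12
      rcases Finset.mem_insert.mp hf₁ with h₁ | h₁ <;>
        rcases Finset.mem_insert.mp hf₂ with h₂ | h₂
      · exact absurd (h₁.trans h₂.symm) hne12
      · subst h₁; rw [agree_comm]; exact hcon f₂ h₂
      · subst h₂; exact hcon f₁ h₁
      · exact hFgood f₁ h₁ f₂ h₂ hne12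
    have hmem' : insert g F ∈ (Finset.univ.filter Good) :=
      Finset.mem_filter.mpr ⟨Finset.mem_univ _, hgood'⟩
    have := hFmax _ hmem'
    rw [Finset.card_insert_of_notMem hgF] at this
    omega
  have hsub : (Finset.univ : Finset (Fin t → Fin b)) ⊆
      F.biUnion (fun f => Finset.univ.filter fun g => h ≤ agree f g) := by
    intro g _
    obtain ⟨f, hf, hfg⟩ := hcover g
    exact Finset.mem_biUnion.mpr ⟨f, hf, by simp [hfg]⟩
  have hball : ∀ f : Fin t → Fin b,
      (Finset.univ.filter fun g => h ≤ agree f g).card ≤ Nat.choose t h * b ^ (t - h) := by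
    intro f
    have hsub2 : (Finset.univ.filter fun g => h ≤ agree f g) ⊆
        (Finset.powersetCard h (Finset.univ : Finset (Fin t))).biUnion
          (fun I => Finset.univ.filter fun g : Fin t → Fin b => ∀ i ∈ I, g i = f i) := by
      intro g hg
      have hg' : h ≤ agree f g := (Finset.mem_filter.mp hg).2
      obtain ⟨I, hIsub, hIcard⟩ := Finset.exists_subset_card_eq hg'
      refine Finset.mem_biUnion.mpr ⟨I, Finset.mem_powersetCard_univ.mpr hIcard, ?_⟩
      simp only [Finset.mem_filter, Finset.mem_univ, true_and]
      intro i hi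
      have := hIsub hi
      exact ((Finset.mem_filter.mp this).2).symm
    calc (Finset.univ.filter fun g => h ≤ agree f g).card
        ≤ ∑ I ∈ Finset.powersetCard h (Finset.univ : Finset (Fin t)),
            (Finset.univ.filter fun g : Fin t → Fin b => ∀ i ∈ I, g i = f i).card :=
          le_trans (Finset.card_le_card hsub2) Finset.card_biUnion_le
      _ ≤ ∑ I ∈ Finset.powersetCard h (Finset.univ : Finset (Fin t)), b ^ (t - h) := by
          apply Finset.sum_le_sum
          intro I hI
          have hIcard : I.card = h := Finset.mem_powersetCard_univ.mp hI
          have hinj : (Finset.univ.filter fun g : Fin t → Fin b => ∀ i ∈ I, g i = f i).card ≤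
              Fintype.card ({i // i ∈ Iᶜ} → Fin b) := by
            apply Finset.card_le_card_of_injOn
              (fun g => fun i : {i // i ∈ Iᶜ} => g i.1)
            · intro g _; exact Finset.mem_univ _
            · intro g₁ hg₁ g₂ hg₂ heq
              have hg₁' := (Finset.mem_filter.mp hg₁).2
              have hg₂' := (Finset.mem_filter.mp hg₂).2
              funext i
              by_cases hiI : i ∈ I
              · rw [hg₁' i hiI, hg₂' i hiI]
              · exact congrFun heq ⟨i, Finset.mem_compl.mpr hiI⟩
          calc (Finset.univ.filter fun g : Fin t → Fin b => ∀ i ∈ I, g i = f i).card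
              ≤ Fintype.card ({i // i ∈ Iᶜ} → Fin b) := hinj
            _ = b ^ (t - h) := by
                rw [Fintype.card_fun]
                congr 1
                · exact Fintype.card_fin b
                · rw [Fintype.card_coe, Finset.card_compl, hIcard, Fintype.card_fin]
      _ = Nat.choose t h * b ^ (t - h) := by
          rw [Finset.sum_const, Finset.card_powersetCard, Finset.card_univ, Fintype.card_fin,
            smul_eq_mul]
  have hcount : b ^ t ≤ F.card * (Nat.choose t h * b ^ (t - h)) := by
    calc b ^ t = Fintype.card (Fin t → Fin b) := by
          rw [Fintype.card_fun, Fintype.card_fin, Fintype.card_fin]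
      _ = (Finset.univ : Finset (Fin t → Fin b)).card := (Finset.card_univ).symm
      _ ≤ (F.biUnion (fun f => Finset.univ.filter fun g => h ≤ agree f g)).card :=
          Finset.card_le_card hsub
      _ ≤ ∑ f ∈ F, (Finset.univ.filter fun g => h ≤ agree f g).card := Finset.card_biUnion_le
      _ ≤ ∑ f ∈ F, Nat.choose t h * b ^ (t - h) := Finset.sum_le_sum fun f _ => hball f
      _ = F.card * (Nat.choose t h * b ^ (t - h)) := by rw [Finset.sum_const, smul_eq_mul]
  have hbpos : 0 < b ^ (t - h) := Nat.pow_pos hb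
  have hkey : b ^ h * b ^ (t - h) ≤ (F.card * Nat.choose t h) * b ^ (t - h) := by
    rw [← pow_add, Nat.add_sub_cancel' hht, mul_assoc]
    exact hcount
  exact Nat.le_of_mul_le_mul_right hkey hbpos

/-- Volumetric packing bound in Euclidean space. -/
lemma packing_bound {n : ℕ} {ι : Type*} (F : Finset ι) (y : ι → EuclideanSpace ℝ (Fin n))
    (r R : ℝ) (hn : 1 ≤ n) (hr : 0 < r) (hR : 0 ≤ R)
    (hsep : ∀ f ∈ F, ∀ g ∈ F, f ≠ g → r ≤ dist (y f) (y g))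
    (hnorm : ∀ f ∈ F, ‖y f‖ ≤ R) :
    (F.card : ℝ) * (r / 2) ^ n ≤ (R + r) ^ n := by
  classical
  haveI : Nonempty (Fin n) := ⟨⟨0, hn⟩⟩
  haveI : Nontrivial (EuclideanSpace ℝ (Fin n)) := inferInstance
  set μ : Measure (EuclideanSpace ℝ (Fin n)) := volume with hμ
  have hdisj : (F : Set ι).PairwiseDisjoint (fun f => ball (y f) (r / 2)) := by
    intro f hf g hg hfg
    exact ball_disjoint_ball (by linarith [hsep f hf g hg hfg])
  have hsum : ∑ f ∈ F, μ (ball (y f) (r / 2)) = μ (⋃ f ∈ F, ball (y f) (r / 2)) :=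
    (measure_biUnion_finset hdisj fun _ _ => measurableSet_ball).symm
  have hcontain : (⋃ f ∈ F, ball (y f) (r / 2)) ⊆
      ball (0 : EuclideanSpace ℝ (Fin n)) (R + r) := by
    intro z hz
    simp only [Set.mem_iUnion] at hz
    obtain ⟨f, hf, hzf⟩ := hz
    rw [mem_ball] at hzf ⊢
    calc dist z 0 ≤ dist z (y f) + dist (y f) 0 := dist_triangle _ _ _
      _ < r / 2 + R := by rw [dist_zero_right]; linarith [hnorm f hf]
      _ ≤ R + r := by linarith
  have hball : ∀ x : EuclideanSpace ℝ (Fin n), ∀ ρ : ℝ, 0 ≤ ρ →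
      μ (ball x ρ) = ENNReal.ofReal (ρ ^ n) * μ (ball 0 1) := by
    intro x ρ hρ
    rw [Measure.addHaar_ball μ x hρ, finrank_euclideanSpace_fin]
  have key : (F.card : ENNReal) * (ENNReal.ofReal ((r / 2) ^ n) * μ (ball 0 1))
      ≤ ENNReal.ofReal ((R + r) ^ n) * μ (ball 0 1) := by
    calc (F.card : ENNReal) * (ENNReal.ofReal ((r / 2) ^ n) * μ (ball 0 1))
        = ∑ f ∈ F, (ENNReal.ofReal ((r / 2) ^ n) * μ (ball 0 1)) := by
          rw [Finset.sum_const, nsmul_eq_mul]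
      _ = ∑ f ∈ F, μ (ball (y f) (r / 2)) := by
          apply Finset.sum_congr rfl
          intro f _
          rw [hball (y f) (r/2) (by linarith)]
      _ = μ (⋃ f ∈ F, ball (y f) (r / 2)) := hsum
      _ ≤ μ (ball (0 : EuclideanSpace ℝ (Fin n)) (R + r)) := measure_mono hcontain
      _ = ENNReal.ofReal ((R + r) ^ n) * μ (ball 0 1) := hball 0 _ (by linarith)
  have hV0 : μ (ball (0 : EuclideanSpace ℝ (Fin n)) 1) ≠ 0 := (measure_ball_pos μ 0 one_pos).ne'
  have hVtop : μ (ball (0 : EuclideanSpace ℝ (Fin n)) 1) ≠ ⊤ := measure_ball_lt_top.ne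
  rw [← mul_assoc] at key
  have key2 : (F.card : ENNReal) * ENNReal.ofReal ((r / 2) ^ n)
      ≤ ENNReal.ofReal ((R + r) ^ n) :=
    (ENNReal.mul_le_mul_iff_left hV0 hVtop).mp key
  have key3 : ENNReal.ofReal ((F.card : ℝ) * (r / 2) ^ n) ≤ ENNReal.ofReal ((R + r) ^ n) := by
    rw [ENNReal.ofReal_mul (by positivity)]
    rw [ENNReal.ofReal_natCast] at *
    exact key2
  exact (ENNReal.ofReal_le_ofReal_iff (by positivity)).mp key3

lemma normSqMulVec_nonneg {n N : ℕ} (Φ : Fin n → Fin N → ℝ) (x : Fin N → ℝ) :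
    0 ≤ normSqMulVec Φ x :=
  Finset.sum_nonneg fun i _ => sq_nonneg _

/-- Pointwise two-sided bounds from the RIP constant. -/
lemma rip_pointwise {n N s : ℕ} (Φ : Fin n → Fin N → ℝ) (δ : ℝ)
    (hΦ : ripConst n N s Φ ≤ δ) {x : Fin N → ℝ} (hx : x ∈ sparseUnitVecs N s) :
    1 - δ ≤ normSqMulVec Φ x ∧ normSqMulVec Φ x ≤ 1 + δ := by
  have hbdd : BddAbove (normSqMulVec Φ '' sparseUnitVecs N s) := by
    refine ⟨∑ i, ∑ j, (Φ i j) ^ 2, ?_⟩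
    rintro v ⟨z, hz, rfl⟩
    unfold normSqMulVec
    apply Finset.sum_le_sum
    intro i _
    calc (∑ j, Φ i j * z j) ^ 2 ≤ (∑ j, (Φ i j) ^ 2) * (∑ j, (z j) ^ 2) :=
        Finset.sum_mul_sq_le_sq_mul_sq _ _ _
      _ = ∑ j, (Φ i j) ^ 2 := by rw [hz.1, mul_one]
  have hbddb : BddBelow (normSqMulVec Φ '' sparseUnitVecs N s) := by
    refine ⟨0, ?_⟩
    rintro v ⟨z, _, rfl⟩
    exact normSqMulVec_nonneg Φ z
  have h1 : ripPlus n N s Φ ≤ δ := le_trans (le_max_left _ _) hΦ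
  have h2 : ripMinus n N s Φ ≤ δ := le_trans (le_max_right _ _) hΦ
  unfold ripPlus at h1
  unfold ripMinus at h2
  constructor
  · have := csInf_le hbddb ⟨x, hx, rfl⟩
    linarith
  · have := le_csSup hbdd ⟨x, hx, rfl⟩
    linarith

lemma normSqMulVec_smul {n N : ℕ} (Φ : Fin n → Fin N → ℝ) (c : ℝ) (x : Fin N → ℝ) :
    normSqMulVec Φ (fun j => c * x j) = c ^ 2 * normSqMulVec Φ x := by
  unfold normSqMulVec
  rw [Finset.mul_sum]
  apply Finset.sum_congr rfl
  intro i _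
  have h : ∑ j, Φ i j * (c * x j) = c * ∑ j, Φ i j * x j := by
    rw [Finset.mul_sum]
    apply Finset.sum_congr rfl
    intro j _
    ring
  rw [h]
  ring

/-- RIP lower bound for arbitrary (not normalized) sparse vectors. -/
lemma rip_lower_general {n N s : ℕ} (Φ : Fin n → Fin N → ℝ) (δ : ℝ) (hδ1 : δ < 1)
    (hΦ : ripConst n N s Φ ≤ δ) (d : Fin N → ℝ)
    (hd_card : (Finset.univ.filter fun j => d j ≠ 0).card ≤ s)
    (hd_pos : 0 < ∑ j, d j ^ 2) :
    (1 - δ) * (∑ j, d j ^ 2) ≤ normSqMulVec Φ d := by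
  set D : ℝ := ∑ j, d j ^ 2 with hD
  have hsD : Real.sqrt D > 0 := Real.sqrt_pos.mpr hd_pos
  set u : Fin N → ℝ := fun j => (Real.sqrt D)⁻¹ * d j with hu
  have hu_mem : u ∈ sparseUnitVecs N s := by
    constructor
    · have : ∑ j, u j ^ 2 = ((Real.sqrt D)⁻¹) ^ 2 * ∑ j, d j ^ 2 := by
        rw [Finset.mul_sum]
        apply Finset.sum_congr rfl
        intro j _
        rw [hu]
        ring
      rw [this, ← hD, inv_pow, Real.sq_sqrt hd_pos.le]
      field_simp
    · refine le_trans (le_of_eq ?_) hd_card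
      congr 1
      apply Finset.filter_congr
      intro j _
      rw [hu]
      simp only [mul_ne_zero_iff, ne_eq, inv_eq_zero]
      constructor
      · intro hh; exact hh.2
      · intro hh; exact ⟨by positivity, hh⟩
  have hlow := (rip_pointwise Φ δ hΦ hu_mem).1
  have hre : normSqMulVec Φ d = D * normSqMulVec Φ u := by
    have hdu : d = fun j => Real.sqrt D * u j := by
      funext j
      rw [hu]
      field_simp
    calc normSqMulVec Φ d = normSqMulVec Φ (fun j => Real.sqrt D * u j) := by rw [← hdu]
      _ = (Real.sqrt D) ^ 2 * normSqMulVec Φ u := normSqMulVec_smul Φ _ u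
      _ = D * normSqMulVec Φ u := by rw [Real.sq_sqrt hd_pos.le]
  rw [hre]
  have := mul_le_mul_of_nonneg_left hlow hd_pos.le
  linarith [this]

end Aux

set_option maxHeartbeats 2000000

/-- **Minimal number of Gaussian measurements.**  For every `δ₀ ∈ (0,1)` there is `c > 0` such
that for all `n, N, s` with `2 ≤ s` and `s/N < 1/5`: if a Gaussian `n × N` random matrix,
normalized as `Φ = A/√n`, satisfies `δ_s(Φ) ≤ δ₀` with probability at least `1/2`, then
`n ≥ c · s · log(N/s)`. -/
theorem minimal_number_of_measurements (δ₀ : ℝ) (hδ₀ : 0 < δ₀) (hδ₀1 : δ₀ < 1) :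
    ∃ c : ℝ, 0 < c ∧
      ∀ n N s : ℕ, 2 ≤ s → (s : ℝ) / N < 1 / 5 →
        (1 / 2 : ENNReal) ≤
          gaussianMatrixMeasure n N
            {A | ripConst n N s (fun i j => A i j / Real.sqrt n) ≤ δ₀} →
        c * s * Real.log ((N : ℝ) / s) ≤ n := by
  classical
  set r : ℝ := Real.sqrt (1 - δ₀) with hr_def
  have hr_pos : 0 < r := Real.sqrt_pos.mpr (by linarith)
  have hr_le1 : r ≤ 1 := by
    rw [hr_def]
    exact Real.sqrt_le_one.mpr (by linarith)
  set L : ℝ := Real.log (6 / r) with hL_def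
  have hL_pos : 0 < L := Real.log_pos (by rw [lt_div_iff₀ hr_pos]; linarith)
  refine ⟨1 / (16 * L), by positivity, ?_⟩
  intro n N s hs hsN hμ
  have hspos : 0 < s := by omega
  rcases Nat.eq_zero_or_pos N with hN0 | hNpos
  · subst hN0
    simp only [Nat.cast_zero, zero_div, Real.log_zero, mul_zero]
    exact Nat.cast_nonneg n
  -- N > 5 s
  have hsN5 : 5 * s < N := by
    have h5 : (5:ℝ) * s < N := by
      rw [div_lt_div_iff₀ (by exact_mod_cast hNpos) (by norm_num)] at hsN
      linarith
    exact_mod_cast h5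
  -- extract a matrix with the RIP
  have hset : {A : Fin n → Fin N → ℝ |
      ripConst n N s (fun i j => A i j / Real.sqrt n) ≤ δ₀}.Nonempty := by
    apply MeasureTheory.nonempty_of_measure_ne_zero (μ := gaussianMatrixMeasure n N)
    intro h0
    rw [h0] at hμ
    simp at hμ
  obtain ⟨A, hA⟩ := hset
  set Φ : Fin n → Fin N → ℝ := fun i j => A i j / Real.sqrt n with hΦdef
  have hΦ : ripConst n N s Φ ≤ δ₀ := hA
  -- n ≥ 1
  have hn1 : 1 ≤ n := by
    by_contra hn
    have hn0 : n = 0 := by omega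
    subst hn0
    set e : Fin N → ℝ := fun j => if j = ⟨0, hNpos⟩ then (1:ℝ) else 0 with he_def
    have he : e ∈ sparseUnitVecs N s := by
      constructor
      · have h1 : ∀ j, e j ^ 2 = if j = (⟨0, hNpos⟩ : Fin N) then (1:ℝ) else 0 := by
          intro j
          by_cases hj : j = ⟨0, hNpos⟩ <;> simp [he_def, hj]
        rw [Finset.sum_congr rfl fun j _ => h1 j]
        simp
      · calc (Finset.univ.filter fun j => e j ≠ 0).card
            ≤ ({⟨0, hNpos⟩} : Finset (Fin N)).card := by
              apply Finset.card_le_card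
              intro j hj
              have hthis := (Finset.mem_filter.mp hj).2
              simp only [Finset.mem_singleton]
              by_contra hne
              simp [he_def, hne] at hthis
          _ ≤ s := by simp; omega
    have hlow := (rip_pointwise Φ δ₀ hΦ he).1
    have h0 : normSqMulVec Φ e = 0 := by
      unfold normSqMulVec
      exact Finset.sum_of_isEmpty _
    rw [h0] at hlow
    linarith
  -- combinatorial parameters
  set t : ℕ := s / 2 with ht_def
  set h : ℕ := (t + 1) / 2 with hh_def
  set b : ℕ := N / t with hb_def
  have ht1 : 1 ≤ t := by omega
  have h2t : 2 * t ≤ s := by omega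
  have hht : h ≤ t := by omega
  have hth : t ≤ 2 * h := by omega
  have htpos : (0:ℝ) < t := by exact_mod_cast ht1
  have hb10 : 10 ≤ b := by
    rw [hb_def, Nat.le_div_iff_mul_le (by omega)]
    omega
  have hb1 : 1 ≤ b := by omega
  have htb : t * b ≤ N := by
    rw [hb_def, mul_comm]
    exact Nat.div_mul_le_self N t
  -- the injection into coordinates
  set ι : Fin t × Fin b → Fin N := fun p => Fin.castLE htb (finProdFinEquiv p) with hι_def
  have hι_inj : Function.Injective ι := by
    intro p q hpq
    rw [hι_def] at hpq
    have := Fin.castLE_injective htb hpq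
    exact finProdFinEquiv.injective this
  -- sparse vectors from codewords
  set S : (Fin t → Fin b) → Finset (Fin N) :=
    fun f => Finset.univ.image (fun i => ι (i, f i)) with hS_def
  have hS_inj : ∀ f : Fin t → Fin b, Function.Injective (fun i : Fin t => ι (i, f i)) := by
    intro f i i' hii
    have h' := hι_inj hii
    exact congrArg Prod.fst h'
  have hS_card : ∀ f, (S f).card = t := by
    intro f
    simp only [hS_def]
    rw [Finset.card_image_of_injective _ (hS_inj f), Finset.card_univ, Fintype.card_fin]
  set x : (Fin t → Fin b) → Fin N → ℝ :=
    fun f j => if j ∈ S f then (Real.sqrt t)⁻¹ else 0 with hx_def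
  have hst : (0:ℝ) < Real.sqrt t := Real.sqrt_pos.mpr htpos
  have hx_sq : ∀ f j, x f j ^ 2 = if j ∈ S f then (t:ℝ)⁻¹ else 0 := by
    intro f j
    simp only [hx_def]
    split
    · rw [inv_pow, Real.sq_sqrt htpos.le]
    · ring
  have hx_sum : ∀ f, ∑ j, x f j ^ 2 = 1 := by
    intro f
    rw [Finset.sum_congr rfl fun j _ => hx_sq f j]
    rw [Finset.sum_ite_mem, Finset.univ_inter, Finset.sum_const, hS_card f, nsmul_eq_mul]
    field_simp
  have hx_supp : ∀ f, (Finset.univ.filter fun j => x f j ≠ 0) = S f := by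
    intro f
    apply Finset.ext
    intro j
    simp only [Finset.mem_filter, Finset.mem_univ, true_and]
    simp only [hx_def]
    constructor
    · intro hj
      by_contra hjS
      simp only [if_neg hjS, ne_eq, not_true_eq_false] at hj
    · intro hj
      rw [if_pos hj]
      positivity
  have hx_mem : ∀ f, x f ∈ sparseUnitVecs N s := by
    intro f
    exact ⟨hx_sum f, by rw [hx_supp f, hS_card f]; omega⟩
  have hprod : ∀ f g, ∑ j, x f j * x g j = ((S f ∩ S g).card : ℝ) * (t:ℝ)⁻¹ := by
    intro f g
    have hpt : ∀ j, x f j * x g j = if j ∈ S f ∩ S g then (t:ℝ)⁻¹ else 0 := by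
      intro j
      simp only [hx_def]
      by_cases h1 : j ∈ S f <;> by_cases h2 : j ∈ S g
      · rw [if_pos h1, if_pos h2, if_pos (Finset.mem_inter.mpr ⟨h1, h2⟩),
          ← mul_inv, Real.mul_self_sqrt htpos.le]
      · rw [if_pos h1, if_neg h2, if_neg (by simp [Finset.mem_inter, h2]), mul_zero]
      · rw [if_neg h1, if_pos h2, if_neg (by simp [Finset.mem_inter, h1]), zero_mul]
      · rw [if_neg h1, if_neg h2, if_neg (by simp [Finset.mem_inter, h1]), mul_zero]
    rw [Finset.sum_congr rfl fun j _ => hpt j]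
    rw [Finset.sum_ite_mem, Finset.univ_inter, Finset.sum_const, nsmul_eq_mul]
  have hinter : ∀ f g, (S f ∩ S g).card = agree f g := by
    intro f g
    have heq : S f ∩ S g = (Finset.univ.filter fun i => f i = g i).image
        (fun i => ι (i, f i)) := by
      apply Finset.ext
      intro j
      simp only [hS_def, Finset.mem_inter, Finset.mem_image, Finset.mem_filter,
        Finset.mem_univ, true_and]
      constructor
      · rintro ⟨⟨i, rfl⟩, ⟨i', hi'⟩⟩
        have hp := hι_inj hi'
        have h1 : i' = i := congrArg Prod.fst hp
        have h2 : g i' = f i := congrArg Prod.snd hp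
        refine ⟨i, ?_, rfl⟩
        rw [h1] at h2
        exact h2.symm
      · rintro ⟨i, hfg, rfl⟩
        exact ⟨⟨i, rfl⟩, ⟨i, by rw [hfg]⟩⟩
    rw [heq, Finset.card_image_of_injective _ (hS_inj f)]
    rfl
  have hdiff : ∀ f g : Fin t → Fin b, agree f g < h →
      (1:ℝ) ≤ ∑ j, (x f j - x g j) ^ 2 := by
    intro f g hfg
    have hexp : ∑ j, (x f j - x g j) ^ 2
        = ∑ j, x f j ^ 2 - 2 * ∑ j, x f j * x g j + ∑ j, x g j ^ 2 := by
      rw [Finset.sum_congr rfl (fun j _ => show (x f j - x g j) ^ 2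
          = x f j ^ 2 - 2 * (x f j * x g j) + x g j ^ 2 by ring),
        Finset.sum_add_distrib, Finset.sum_sub_distrib, ← Finset.mul_sum]
    rw [hexp, hx_sum f, hx_sum g, hprod f g, hinter f g]
    have h2a : 2 * agree f g ≤ t := by omega
    have h2aR : 2 * (agree f g : ℝ) ≤ t := by exact_mod_cast h2a
    have hhalf : (agree f g : ℝ) * (t:ℝ)⁻¹ ≤ 1/2 := by
      rw [mul_inv_le_iff₀ htpos]
      linarith
    linarith
  have hd_card : ∀ f g : Fin t → Fin b,
      (Finset.univ.filter fun j => x f j - x g j ≠ 0).card ≤ s := by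
    intro f g
    calc (Finset.univ.filter fun j => x f j - x g j ≠ 0).card
        ≤ (S f ∪ S g).card := by
          apply Finset.card_le_card
          intro j hj
          have hj' := (Finset.mem_filter.mp hj).2
          rw [Finset.mem_union]
          by_contra hcon
          push_neg at hcon
          simp only [hx_def] at hj'
          simp only [if_neg hcon.1, if_neg hcon.2, sub_zero, ne_eq, not_true_eq_false] at hj'
      _ ≤ (S f).card + (S g).card := Finset.card_union_le _ _
      _ ≤ s := by rw [hS_card f, hS_card g]; omega
  obtain ⟨F, hFgood, hFcard⟩ := code_exists t b h hb1 hht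
  set y : (Fin t → Fin b) → EuclideanSpace ℝ (Fin n) :=
    fun f => (WithLp.equiv 2 (Fin n → ℝ)).symm (fun i => ∑ j, Φ i j * x f j) with hy_def
  have hy_apply : ∀ f i, y f i = ∑ j, Φ i j * x f j := fun f i => rfl
  have hy_norm : ∀ f ∈ F, ‖y f‖ ≤ 2 := by
    intro f _
    rw [EuclideanSpace.norm_eq]
    have hsum : ∑ i, ‖y f i‖ ^ 2 = normSqMulVec Φ (x f) := by
      unfold normSqMulVec
      apply Finset.sum_congr rfl
      intro i _
      rw [hy_apply, Real.norm_eq_abs, sq_abs]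
    rw [hsum]
    have hup := (rip_pointwise Φ δ₀ hΦ (hx_mem f)).2
    calc Real.sqrt (normSqMulVec Φ (x f)) ≤ Real.sqrt 4 := Real.sqrt_le_sqrt (by linarith)
      _ = 2 := by
          rw [show (4:ℝ) = 2 ^ 2 by norm_num, Real.sqrt_sq (by norm_num)]
  have hy_sep : ∀ f ∈ F, ∀ g ∈ F, f ≠ g → r ≤ dist (y f) (y g) := by
    intro f hf g hg hfg
    have hagree := hFgood f hf g hg hfg
    have hd1 : (1:ℝ) ≤ ∑ j, (x f j - x g j) ^ 2 := hdiff f g hagree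
    have hlow := rip_lower_general Φ δ₀ hδ₀1 hΦ (fun j => x f j - x g j)
      (hd_card f g) (by linarith)
    rw [EuclideanSpace.dist_eq]
    have hcoord : ∀ i : Fin n, dist (y f i) (y g i) ^ 2
        = (∑ j, Φ i j * (x f j - x g j)) ^ 2 := by
      intro i
      rw [Real.dist_eq, sq_abs, hy_apply, hy_apply]
      congr 1
      rw [← Finset.sum_sub_distrib]
      apply Finset.sum_congr rfl
      intro j _
      ring
    rw [Finset.sum_congr rfl fun i _ => hcoord i]
    have hlow2 : (1 - δ₀) ≤ ∑ i, (∑ j, Φ i j * (x f j - x g j)) ^ 2 := by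
      have hle : (1 - δ₀) * 1 ≤ (1 - δ₀) * (∑ j, (x f j - x g j) ^ 2) :=
        mul_le_mul_of_nonneg_left hd1 (by linarith)
      unfold normSqMulVec at hlow
      linarith
    rw [hr_def]
    exact Real.sqrt_le_sqrt hlow2
  have hpack := packing_bound F y r 2 hn1 hr_pos (by norm_num) hy_sep hy_norm
  have hcard_le : (F.card : ℝ) ≤ (6 / r) ^ n := by
    have h3 : ((2:ℝ) + r) ^ n ≤ 3 ^ n := pow_le_pow_left₀ (by linarith) (by linarith) n
    have h2 : (F.card : ℝ) * (r / 2) ^ n ≤ 3 ^ n := le_trans hpack h3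
    have hhalf : (0:ℝ) < (r / 2) ^ n := by positivity
    calc (F.card : ℝ) ≤ 3 ^ n / (r / 2) ^ n := by
          rw [le_div_iff₀ hhalf]
          exact h2
      _ = (3 / (r / 2)) ^ n := by rw [← div_pow]
      _ = (6 / r) ^ n := by
          have hr' : (3:ℝ) / (r / 2) = 6 / r := by
            rw [div_div_eq_mul_div]
            ring_nf
          rw [hr']
  have hcode : ((b : ℝ) / 4) ^ h ≤ (F.card : ℝ) := by
    have hchoose : Nat.choose t h ≤ 4 ^ h := by
      calc Nat.choose t h ≤ 2 ^ t := nat_choose_le_two_pow t h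
        _ ≤ 2 ^ (2 * h) := Nat.pow_le_pow_right (by norm_num) hth
        _ = 4 ^ h := by rw [pow_mul]; norm_num
    have hnat : b ^ h ≤ F.card * 4 ^ h :=
      le_trans hFcard (Nat.mul_le_mul_left _ hchoose)
    have hRR : (b : ℝ) ^ h ≤ (F.card : ℝ) * 4 ^ h := by exact_mod_cast hnat
    rw [div_pow, div_le_iff₀ (by positivity)]
    exact hRR
  have hbh : ((b : ℝ) / 4) ^ h ≤ (6 / r) ^ n := le_trans hcode hcard_le
  have hbR10 : (10:ℝ) ≤ (b:ℝ) := by exact_mod_cast hb10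
  have hb4gt1 : (1:ℝ) < (b:ℝ) / 4 := by linarith
  have hlog1 : (h : ℝ) * Real.log ((b:ℝ) / 4) ≤ (n : ℝ) * L := by
    have hmono := Real.log_le_log (by positivity) hbh
    rw [Real.log_pow, Real.log_pow] at hmono
    rw [hL_def]
    exact hmono
  have hNt_lt : (N : ℝ) / t < (b : ℝ) + 1 := by
    have hnat : N < (b + 1) * t := by
      rw [← Nat.div_lt_iff_lt_mul (by omega)]
      omega
    have hcast : (N : ℝ) < ((b:ℝ) + 1) * t := by exact_mod_cast hnat
    rw [div_lt_iff₀ htpos]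
    linarith
  have hNt10 : (10:ℝ) ≤ (N : ℝ) / t := by
    have hnat : 10 * t ≤ N := by omega
    have hcast : (10:ℝ) * t ≤ N := by exact_mod_cast hnat
    rw [le_div_iff₀ htpos]
    linarith
  have hspos' : (0:ℝ) < s := by exact_mod_cast hspos
  have hNpos' : (0:ℝ) < N := by exact_mod_cast hNpos
  have hts2 : (t : ℝ) ≤ (s:ℝ) / 2 := by
    have : (2:ℝ) * t ≤ s := by exact_mod_cast h2t
    linarith
  have hNt2Ns : 2 * ((N:ℝ) / s) ≤ (N:ℝ) / t := by
    have h1 : (N:ℝ) / ((s:ℝ)/2) ≤ (N:ℝ) / t :=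
      div_le_div_of_nonneg_left hNpos'.le htpos hts2
    have h2 : (N:ℝ) * 2 / s = 2 * ((N:ℝ) / s) := by ring
    rw [div_div_eq_mul_div, h2] at h1
    linarith [h1]
  have hbNs : (9/5 : ℝ) * ((N:ℝ)/s) ≤ (b:ℝ) := by
    have h1 : (9/10 : ℝ) * ((N:ℝ)/t) ≤ (b:ℝ) := by linarith [hNt_lt, hNt10]
    linarith [hNt2Ns, h1]
  have hNs5R : (5:ℝ) < (N:ℝ) / s := by
    have : (5:ℝ) * s < N := by exact_mod_cast hsN5
    rw [lt_div_iff₀ hspos']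
    linarith
  have hsqrtb : Real.sqrt ((N:ℝ)/s) ≤ (b:ℝ)/4 := by
    have hX : (0:ℝ) < (N:ℝ)/s := by linarith
    have hsq : (N:ℝ)/s ≤ ((9/20:ℝ) * ((N:ℝ)/s)) ^ 2 := by nlinarith
    calc Real.sqrt ((N:ℝ)/s) ≤ Real.sqrt (((9/20:ℝ) * ((N:ℝ)/s)) ^ 2) :=
        Real.sqrt_le_sqrt hsq
      _ = (9/20:ℝ) * ((N:ℝ)/s) := Real.sqrt_sq (by positivity)
      _ ≤ (b:ℝ)/4 := by linarith
  have hlogNs : (0:ℝ) ≤ Real.log ((N:ℝ)/s) := Real.log_nonneg (by linarith)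
  have hlogb_half : Real.log ((N:ℝ)/s) / 2 ≤ Real.log ((b:ℝ)/4) := by
    rw [← Real.log_sqrt (by positivity)]
    exact Real.log_le_log (Real.sqrt_pos.mpr (by linarith)) hsqrtb
  have hh8 : (s:ℝ) ≤ 8 * (h:ℝ) := by
    have : s ≤ 8 * h := by omega
    exact_mod_cast this
  have hkey : (s:ℝ) * Real.log ((N:ℝ)/s) ≤ 16 * ((n:ℝ) * L) := by
    have hstep : (s:ℝ) * Real.log ((N:ℝ)/s)
        ≤ (8 * (h:ℝ)) * (2 * Real.log ((b:ℝ)/4)) :=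
      mul_le_mul hh8 (by linarith) hlogNs (by positivity)
    calc (s:ℝ) * Real.log ((N:ℝ)/s) ≤ (8 * (h:ℝ)) * (2 * Real.log ((b:ℝ)/4)) := hstep
      _ = 16 * ((h:ℝ) * Real.log ((b:ℝ)/4)) := by ring
      _ ≤ 16 * ((n:ℝ) * L) := by linarith
  have h16L : (0:ℝ) < 16 * L := by linarith
  rw [mul_assoc, one_div, inv_mul_le_iff₀ h16L]
  linarith
end

section
/- For 0 < α < 1 and δ > 0 with α + δ < 1 and δ < min(α, 1−α), the Kullback–Leibler divergence between Bernoulli(α) and Bernoulli(α+δ) satisfies D(α ‖ α+δ) = α·log(α/(α+δ)) + (1−α)·log((1−α)/(1−α−δ)) ≥ δ²·(1/α + 1/(1−α))·log(e/2). -/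
open Real Set

private lemma hasDerivAtG (c x : ℝ) (hx : -1 < x) :
    HasDerivAt (fun t : ℝ => t - c * t ^ 2 - Real.log (1 + t))
      (1 - c * (2 * x) - 1 / (1 + x)) x := by
  have h1 : HasDerivAt (fun t : ℝ => 1 + t) 1 x := (hasDerivAt_id x).const_add 1
  have h2 : HasDerivAt (fun t : ℝ => Real.log (1 + t)) (1 / (1 + x)) x :=
    h1.log (by linarith)
  have h3 : HasDerivAt (fun t : ℝ => t - c * t ^ 2) (1 - c * (2 * x)) x := by
    simpa [Pi.sub_def] using (hasDerivAt_id x).sub (((hasDerivAt_pow 2 x)).const_mul c)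
  simpa [Pi.sub_def] using h3.sub h2

private lemma hasDerivAtF (c x : ℝ) (hx : x < 1) :
    HasDerivAt (fun t : ℝ => -t - c * t ^ 2 - Real.log (1 - t))
      (-1 - c * (2 * x) + 1 / (1 - x)) x := by
  have h1 : HasDerivAt (fun t : ℝ => 1 - t) (-1) x := by
    simpa using (hasDerivAt_id x).const_sub 1
  have h2 : HasDerivAt (fun t : ℝ => Real.log (1 - t)) (-1 / (1 - x)) x :=
    h1.log (by linarith)
  have h3 : HasDerivAt (fun t : ℝ => -t - c * t ^ 2) (-1 - c * (2 * x)) x := by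
    simpa [Pi.sub_def, Pi.neg_def] using ((hasDerivAt_id x).neg).sub (((hasDerivAt_pow 2 x)).const_mul c)
  have := h3.sub h2
  simp only [Pi.sub_def] at this
  rw [show (-1 - c * (2 * x) + 1 / (1 - x)) = -1 - c * (2 * x) - -1 / (1 - x) by ring]
  exact this

private lemma key_log_one_add (x : ℝ) (hx0 : 0 ≤ x) (hx1 : x ≤ 1) :
    Real.log (1 + x) ≤ x - (1 - Real.log 2) * x ^ 2 := by
  set c : ℝ := 1 - Real.log 2 with hc
  have hl2a : (0.6931471803 : ℝ) < Real.log 2 := Real.log_two_gt_d9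
  have hl2b : Real.log 2 < 0.6931471808 := Real.log_two_lt_d9
  have hcpos : 0 < c := by rw [hc]; linarith
  set x₀ : ℝ := (2 * c)⁻¹ - 1 with hx₀def
  have h2c : 0 < 2 * c := by linarith
  have hx₀eq : 2 * c * (1 + x₀) = 1 := by
    rw [hx₀def]; field_simp; ring
  have hx₀0 : 0 < x₀ := by
    rw [hx₀def]
    have h2c1 : 2 * c < 1 := by rw [hc]; linarith
    have := (one_lt_inv_iff₀).2 ⟨h2c, h2c1⟩
    linarith
  have hx₀1 : x₀ < 1 := by nlinarith [hx₀eq]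
  set G : ℝ → ℝ := fun t => t - c * t ^ 2 - Real.log (1 + t) with hG
  have hcont : ∀ a b : ℝ, 0 ≤ a → ContinuousOn G (Icc a b) := by
    intro a b ha
    apply ContinuousOn.sub
    · exact (continuousOn_id.sub (continuousOn_const.mul (continuousOn_pow 2)))
    · apply ContinuousOn.log
      · exact continuousOn_const.add continuousOn_id
      · intro t ht
        have := ht.1
        intro h
        nlinarith
  have hG0 : G 0 = 0 := by simp [hG]
  have hG1 : G 1 = 0 := by
    simp only [hG, hc]
    rw [show (1 : ℝ) + 1 = 2 by norm_num]
    ring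
  rcases le_or_gt x x₀ with hcase | hcase
  · have hmono : MonotoneOn G (Icc 0 x₀) := by
      apply monotoneOn_of_hasDerivWithinAt_nonneg (convex_Icc 0 x₀) (hcont 0 x₀ le_rfl)
        (f' := fun t => 1 - c * (2 * t) - 1 / (1 + t))
      · intro t ht
        rw [interior_Icc] at ht
        exact (hasDerivAtG c t (by linarith [ht.1])).hasDerivWithinAt
      · intro t ht
        rw [interior_Icc] at ht
        obtain ⟨ht0, ht1⟩ := ht
        have h1t : 0 < 1 + t := by linarith
        rw [sub_nonneg, div_le_iff₀ h1t]
        have h2ct : 2 * c * (1 + t) < 1 := by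
          nlinarith [mul_pos h2c (show (0:ℝ) < x₀ - t by linarith), hx₀eq]
        nlinarith [mul_pos ht0 (show (0:ℝ) < 1 - 2 * c * (1 + t) by linarith)]
    have h := hmono (left_mem_Icc.2 hx₀0.le) ⟨hx0, hcase⟩ hx0
    rw [hG0] at h
    have h2 : 0 ≤ x - c * x ^ 2 - Real.log (1 + x) := h
    linarith
  · have hanti : AntitoneOn G (Icc x₀ 1) := by
      apply antitoneOn_of_hasDerivWithinAt_nonpos (convex_Icc x₀ 1) (hcont x₀ 1 hx₀0.le)
        (f' := fun t => 1 - c * (2 * t) - 1 / (1 + t))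
      · intro t ht
        rw [interior_Icc] at ht
        exact (hasDerivAtG c t (by linarith [hx₀0, ht.1])).hasDerivWithinAt
      · intro t ht
        rw [interior_Icc] at ht
        obtain ⟨ht0, ht1⟩ := ht
        have h1t : 0 < 1 + t := by nlinarith [hx₀0]
        rw [sub_nonpos, le_div_iff₀ h1t]
        have ht0' : 0 < t := by linarith [hx₀0]
        have h2ct : 1 < 2 * c * (1 + t) := by
          nlinarith [mul_pos h2c (show (0:ℝ) < t - x₀ by linarith), hx₀eq]
        nlinarith [mul_pos ht0' (show (0:ℝ) < 2 * c * (1 + t) - 1 by linarith)]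
    have h := hanti ⟨hcase.le, hx1⟩ (right_mem_Icc.2 hx₀1.le) hx1
    rw [hG1] at h
    have h2 : 0 ≤ x - c * x ^ 2 - Real.log (1 + x) := h
    linarith

private lemma key_log_one_sub (y : ℝ) (hy0 : 0 ≤ y) (hy1 : y < 1) :
    Real.log (1 - y) ≤ -y - (1 - Real.log 2) * y ^ 2 := by
  set c : ℝ := 1 - Real.log 2 with hc
  have hl2a : (0.6931471803 : ℝ) < Real.log 2 := Real.log_two_gt_d9
  have hl2b : Real.log 2 < 0.6931471808 := Real.log_two_lt_d9
  set F : ℝ → ℝ := fun t => -t - c * t ^ 2 - Real.log (1 - t) with hF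
  have hmono : MonotoneOn F (Icc 0 y) := by
    apply monotoneOn_of_hasDerivWithinAt_nonneg (convex_Icc 0 y)
      (f' := fun t => -1 - c * (2 * t) + 1 / (1 - t))
    · apply ContinuousOn.sub
      · exact ((continuousOn_id.neg).sub (continuousOn_const.mul (continuousOn_pow 2)))
      · apply ContinuousOn.log
        · exact continuousOn_const.sub continuousOn_id
        · intro t ht
          have h2 := ht.2
          intro h
          nlinarith
    · intro t ht
      rw [interior_Icc] at ht
      exact (hasDerivAtF c t (by linarith [ht.2])).hasDerivWithinAt
    · intro t ht
      rw [interior_Icc] at ht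
      obtain ⟨ht0, ht1⟩ := ht
      have h1t : 0 < 1 - t := by linarith
      have key : -1 - c * (2 * t) + 1 / (1 - t) = (t * (1 - 2 * c * (1 - t))) / (1 - t) := by
        field_simp
        ring
      rw [key]
      apply div_nonneg _ h1t.le
      have h2c1 : 2 * c * (1 - t) < 1 := by nlinarith [hl2a]
      nlinarith
  have h := hmono (left_mem_Icc.2 hy0) (right_mem_Icc.2 hy0) hy0
  have hF0 : F 0 = 0 := by simp [hF]
  rw [hF0] at h
  have h2 : 0 ≤ -y - c * y ^ 2 - Real.log (1 - y) := h
  linarith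

/-- **Lower bound for the Bernoulli Kullback–Leibler divergence.**  For `0 < α < 1`, `δ > 0`
with `α + δ < 1` and `δ < min(α, 1 − α)`,
`D(α ‖ α+δ) = α log(α/(α+δ)) + (1−α) log((1−α)/(1−α−δ)) ≥ δ²(1/α + 1/(1−α)) log(e/2)`. -/
theorem bernoulli_kl_lower_bound (α δ : ℝ) (hα0 : 0 < α) (hα1 : α < 1) (hδ : 0 < δ)
    (hαδ : α + δ < 1) (hδmin : δ < min α (1 - α)) :
    δ ^ 2 * (1 / α + 1 / (1 - α)) * Real.log (Real.exp 1 / 2) ≤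
      α * Real.log (α / (α + δ)) + (1 - α) * Real.log ((1 - α) / (1 - α - δ)) := by
  have hδα : δ < α := lt_of_lt_of_le hδmin (min_le_left _ _)
  have hδα' : δ < 1 - α := lt_of_lt_of_le hδmin (min_le_right _ _)
  have h1α : 0 < 1 - α := by linarith
  set c : ℝ := 1 - Real.log 2 with hc
  have hle : Real.log (Real.exp 1 / 2) = c := by
    rw [Real.log_div (Real.exp_ne_zero 1) two_ne_zero, Real.log_exp]
  rw [hle]
  set x : ℝ := δ / α with hx
  set y : ℝ := δ / (1 - α) with hy
  have hx0 : 0 ≤ x := by positivity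
  have hx1 : x ≤ 1 := by
    rw [hx, div_le_one hα0]; linarith
  have hy0 : 0 ≤ y := by positivity
  have hy1 : y < 1 := by
    rw [hy, div_lt_one h1α]; linarith
  have hA := key_log_one_add x hx0 hx1
  have hB := key_log_one_sub y hy0 hy1
  have e1 : Real.log (α / (α + δ)) = -Real.log (1 + x) := by
    rw [← Real.log_inv]
    congr 1
    rw [hx]
    field_simp
  have e2 : Real.log ((1 - α) / (1 - α - δ)) = -Real.log (1 - y) := by
    rw [← Real.log_inv]
    congr 1
    rw [hy]
    field_simp
  rw [e1, e2]
  have hA' : (1 - Real.log 2) * x ^ 2 - x ≤ -Real.log (1 + x) := by linarith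
  have hB' : y + (1 - Real.log 2) * y ^ 2 ≤ -Real.log (1 - y) := by linarith
  have h1 : α * ((1 - Real.log 2) * x ^ 2 - x) ≤ α * -Real.log (1 + x) :=
    mul_le_mul_of_nonneg_left hA' hα0.le
  have h2 : (1 - α) * (y + (1 - Real.log 2) * y ^ 2) ≤ (1 - α) * -Real.log (1 - y) :=
    mul_le_mul_of_nonneg_left hB' h1α.le
  have heq : δ ^ 2 * (1 / α + 1 / (1 - α)) * c =
      α * ((1 - Real.log 2) * x ^ 2 - x) + (1 - α) * (y + (1 - Real.log 2) * y ^ 2) := by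
    rw [hc, hx, hy]; field_simp; ring
  linarith
end

section
/- For every real x with −1 < x < 1, the inequality log(1 + x) ≤ x − (log(e/2))·x² holds. -/
/-- **Elementary logarithm inequality.**  For `−1 < x < 1`,
`log(1 + x) ≤ x − log(e/2)·x²`. -/
theorem log_one_add_le (x : ℝ) (h₁ : -1 < x) (h₂ : x < 1) :
    Real.log (1 + x) ≤ x - Real.log (Real.exp 1 / 2) * x ^ 2 := by
  have hx0 : (0:ℝ) < 1 + x := by linarith
  have hLdef : Real.log (Real.exp 1 / 2) = 1 - Real.log 2 := by
    rw [Real.log_div (Real.exp_ne_zero 1) two_ne_zero, Real.log_exp]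
  rw [hLdef]
  set L := Real.log 2 with hLset
  have hL1 : 0.6931471803 < L := Real.log_two_gt_d9
  have hL2 : L < 0.6931471808 := Real.log_two_lt_d9
  rcases le_total x 0 with hx | hx
  · -- Case x ≤ 0 : use the quartic root s = (1+x)^(1/4) and log s ≤ s - 1
    set s : ℝ := (1 + x) ^ ((1:ℝ)/4) with hs
    have hs0 : 0 < s := Real.rpow_pos_of_pos hx0 _
    have hs4 : s ^ 4 = 1 + x := by
      rw [hs, ← Real.rpow_natCast ((1+x) ^ ((1:ℝ)/4)) 4, ← Real.rpow_mul hx0.le]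
      norm_num
    have hs1 : s ≤ 1 := Real.rpow_le_one hx0.le (by linarith) (by norm_num)
    have hlog : Real.log (1 + x) ≤ 4 * (s - 1) := by
      have h1 : Real.log (1 + x) = 4 * Real.log s := by
        rw [← hs4, Real.log_pow]; push_cast; ring
      have h2 : Real.log s ≤ s - 1 := Real.log_le_sub_one_of_pos hs0
      linarith
    have hQ : 0 ≤ s^2 + 2*s + 3 - (1-L) * (s^3 + s^2 + s + 1)^2 := by
      nlinarith [sq_nonneg s, sq_nonneg (s-1), sq_nonneg (s+1), hs0.le, hs1,
        mul_nonneg hs0.le hs0.le, mul_nonneg (mul_nonneg hs0.le hs0.le) hs0.le,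
        sq_nonneg (s^2 - s), sq_nonneg (s^3 - s)]
    have key : 4 * (s - 1) ≤ (s^4 - 1) - (1-L) * (s^4 - 1)^2 := by
      nlinarith [mul_nonneg (sq_nonneg (s-1)) hQ]
    have hxeq : s ^ 4 - 1 = x := by linarith
    rw [hxeq] at key
    linarith
  · -- Case 0 ≤ x
    have h2x : (0:ℝ) < 2 * (1 + x) := by linarith
    -- bound : log (1+x) ≤ x(2+x)/(2(1+x))
    have hg0 : 0 ≤ x * (2 + x) / (2 * (1 + x)) := by positivity
    have hb2 : Real.log (1 + x) ≤ x * (2 + x) / (2 * (1 + x)) := by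
      rw [Real.log_le_iff_le_exp hx0]
      have hq : 1 + x * (2 + x) / (2 * (1 + x)) + (x * (2 + x) / (2 * (1 + x)))^2 / 2
          ≤ Real.exp (x * (2 + x) / (2 * (1 + x))) := by
        have := Real.quadratic_le_exp_of_nonneg hg0
        linarith
      have halg : 1 + x ≤ 1 + x * (2 + x) / (2 * (1 + x))
          + (x * (2 + x) / (2 * (1 + x)))^2 / 2 := by
        rw [div_pow, ← sub_nonneg]
        have hne : (2 * (1 + x)) ≠ 0 := ne_of_gt h2x
        field_simp
        nlinarith [pow_nonneg hx 4]
      linarith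
    have hLlt1 : 2 - 2*L > 0 := by linarith
    rcases le_total x ((2*L - 1) / (2 - 2*L)) with hxs | hxs
    · -- x ≤ x* : the rational bound suffices
      have hnum : 0 ≤ 2*L - 1 - (2 - 2*L) * x := by
        rw [le_div_iff₀ hLlt1] at hxs
        linarith
      have : x * (2 + x) / (2 * (1 + x)) ≤ x - (1 - L) * x ^ 2 := by
        rw [div_le_iff₀ h2x]
        nlinarith [mul_nonneg (sq_nonneg x) hnum]
      linarith
    · -- x ≥ x* : use log(1+x) = log 2 + log((1+x)/2) ≤ L + ((1+x)/2 - 1)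
      have hfac : 0 ≤ (1 - L) * x - L + 1/2 := by
        rw [div_le_iff₀ hLlt1] at hxs
        linarith
      have hlog : Real.log (1 + x) ≤ L + ((1 + x)/2 - 1) := by
        have h1 : Real.log ((1 + x)/2) ≤ (1 + x)/2 - 1 :=
          Real.log_le_sub_one_of_pos (by linarith)
        have h2 : Real.log ((1 + x)/2) = Real.log (1 + x) - L := by
          rw [Real.log_div (ne_of_gt hx0) two_ne_zero, hLset]
        linarith
      have : L + ((1 + x)/2 - 1) ≤ x - (1 - L) * x ^ 2 := by
        nlinarith [mul_nonneg (by linarith : (0:ℝ) ≤ 1 - x) hfac]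
      linarith
end

section
/- Let X² be a χ²₁ random variable (X standard Gaussian) with density f(x) = (2πx)^{−1/2}·e^{−x/2} on (0,∞). Then for every s > 0: (i) ∫_s^∞ x·f(x) dx = √(2s/π)·e^{−s/2} + ∫_s^∞ f(x) dx, and (ii) E(X² | X² > s) = s / E(√(s/(s+Y))) + 1, where Y is an exponential random variable with rate 1/2 (i.e. density (1/2)e^{−y/2} on (0,∞)). In particular E(X² | X² > s) > s. -/
open MeasureTheory
open Set Filter Real Topology

/-- The density of the χ²₁ distribution: `f(x) = (2πx)^{-1/2} e^{-x/2}` for `x > 0`. -/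
noncomputable def chiSq1Density (x : ℝ) : ℝ :=
  Real.exp (-x / 2) / Real.sqrt (2 * Real.pi * x)

/-- **Conditional mean of χ²₁ above a level (eq. (24) of the paper).**  For every `s > 0`:
(i) `∫_s^∞ x f(x) dx = √(2s/π) e^{-s/2} + ∫_s^∞ f(x) dx`;
(ii) `E(X² | X² > s) = s / E√(s/(s+Y)) + 1` where `Y ~ Exp(1/2)`;
in particular `E(X² | X² > s) > s`. -/
theorem chiSq1_conditional_mean (s : ℝ) (hs : 0 < s) :
    (∫ x in Set.Ioi s, x * chiSq1Density x) =
        Real.sqrt (2 * s / Real.pi) * Real.exp (-s / 2) +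
          ∫ x in Set.Ioi s, chiSq1Density x ∧
    (∫ x in Set.Ioi s, x * chiSq1Density x) / (∫ x in Set.Ioi s, chiSq1Density x) =
        s / (∫ y in Set.Ioi (0 : ℝ), Real.sqrt (s / (s + y)) * (1 / 2 * Real.exp (-y / 2)))
          + 1 ∧
    s < (∫ x in Set.Ioi s, x * chiSq1Density x) / (∫ x in Set.Ioi s, chiSq1Density x) := by
  have hπ : (0:ℝ) < 2 * Real.pi := by positivity
  have hsq2π : (0:ℝ) < Real.sqrt (2 * Real.pi) := Real.sqrt_pos.2 hπ
  have hmeas : Measurable chiSq1Density := by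
    unfold chiSq1Density; fun_prop
  -- pointwise formulas on Ioi s
  have hfx : ∀ x ∈ Ioi s, chiSq1Density x
      = Real.exp (-x / 2) / (Real.sqrt (2 * Real.pi) * Real.sqrt x) := by
    intro x hx
    rw [chiSq1Density, Real.sqrt_mul hπ.le]
  have hxfx : ∀ x ∈ Ioi s, x * chiSq1Density x
      = Real.sqrt x * Real.exp (-x / 2) / Real.sqrt (2 * Real.pi) := by
    intro x hx
    have hx0 : (0:ℝ) < x := hs.trans hx
    have hsx : Real.sqrt x ≠ 0 := (Real.sqrt_pos.2 hx0).ne'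
    rw [hfx x hx]
    field_simp
    linear_combination (-1) *
      Real.sq_sqrt hx0.le
  -- integrability of the density
  have hInt_f : IntegrableOn chiSq1Density (Ioi s) := by
    refine Integrable.mono' ((exp_neg_integrableOn_Ioi s (by norm_num : (0:ℝ) < 1/2)).const_mul
      ((Real.sqrt (2 * Real.pi * s))⁻¹)) (hmeas.aestronglyMeasurable.restrict) ?_
    filter_upwards [ae_restrict_mem measurableSet_Ioi] with x hx
    have hx0 : (0:ℝ) < x := hs.trans hx
    have h1 : (0:ℝ) < Real.sqrt (2 * Real.pi * s) := Real.sqrt_pos.2 (by positivity)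
    have h2 : Real.sqrt (2 * Real.pi * s) ≤ Real.sqrt (2 * Real.pi * x) :=
      Real.sqrt_le_sqrt (mul_le_mul_of_nonneg_left (le_of_lt hx) hπ.le)
    rw [Real.norm_eq_abs, abs_of_nonneg (by rw [chiSq1Density]; positivity),
      chiSq1Density]
    rw [show -(1/2:ℝ) * x = -x/2 by ring]
    rw [div_le_iff₀ (by positivity), mul_comm ((Real.sqrt (2*Real.pi*s))⁻¹) _, mul_assoc]
    refine le_mul_of_one_le_right (Real.exp_pos _).le ?_
    rw [← div_eq_inv_mul, one_le_div h1]
    exact h2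
  -- integrability of x * f x
  have hInt_xf : IntegrableOn (fun x => x * chiSq1Density x) (Ioi s) := by
    refine Integrable.mono' ((exp_neg_integrableOn_Ioi s (by norm_num : (0:ℝ) < 1/4)).const_mul
      (5 / Real.sqrt (2 * Real.pi))) ((measurable_id.mul hmeas).aestronglyMeasurable.restrict) ?_
    filter_upwards [ae_restrict_mem measurableSet_Ioi] with x hx
    have hx0 : (0:ℝ) < x := hs.trans hx
    have hd0 : (0:ℝ) ≤ chiSq1Density x := by rw [chiSq1Density]; positivity
    rw [Real.norm_eq_abs, abs_of_nonneg (mul_nonneg hx0.le hd0), hxfx x hx]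
    have h1 : Real.sqrt x ≤ x + 1 := by
      nlinarith [Real.sq_sqrt hx0.le, Real.sqrt_nonneg x, sq_nonneg (Real.sqrt x - 1)]
    have hmul : Real.exp (-(1/4)*x) * Real.exp ((1/4)*x) = 1 := by
      rw [← Real.exp_add]; norm_num
    have key : (x + 1) * Real.exp (-(1/4)*x) ≤ 5 := by
      nlinarith [mul_nonneg (sub_nonneg.2 (Real.add_one_le_exp ((1/4)*x)))
        (Real.exp_pos (-(1/4)*x)).le, hmul, (Real.exp_pos (-(1/4)*x)).le, hx0.le]
    have h2 : (x + 1) * Real.exp (-x/2) ≤ 5 * Real.exp (-(1/4) * x) := by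
      have hsplit : Real.exp (-x/2) = Real.exp (-(1/4)*x) * Real.exp (-(1/4)*x) := by
        rw [← Real.exp_add]; congr 1; ring
      rw [hsplit, ← mul_assoc]
      exact mul_le_mul_of_nonneg_right key (Real.exp_pos _).le
    rw [div_le_iff₀ hsq2π, div_mul_eq_mul_div, div_mul_cancel₀ _ hsq2π.ne']
    calc Real.sqrt x * Real.exp (-x/2) ≤ (x+1) * Real.exp (-x/2) :=
          mul_le_mul_of_nonneg_right h1 (Real.exp_pos _).le
      _ ≤ 5 * Real.exp (-(1/4)*x) := h2
  -- the antiderivative  F x = -2 √x e^{-x/2}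
  set F : ℝ → ℝ := fun x => -2 * (Real.sqrt x * Real.exp (-x / 2)) with hF
  have hderiv : ∀ x ∈ Ioi s, HasDerivAt F
      (Real.sqrt x * Real.exp (-x / 2) - Real.exp (-x / 2) / Real.sqrt x) x := by
    intro x hx
    have hx0 : (0:ℝ) < x := hs.trans hx
    have hsx : Real.sqrt x ≠ 0 := (Real.sqrt_pos.2 hx0).ne'
    have h1 : HasDerivAt Real.sqrt (1 / (2 * Real.sqrt x)) x := Real.hasDerivAt_sqrt hx0.ne'
    have h2 : HasDerivAt (fun x : ℝ => Real.exp (-x / 2)) (Real.exp (-x / 2) * (-1 / 2)) x := by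
      have h0 : HasDerivAt (fun x : ℝ => -x / 2) (-1 / 2) x := by
        simpa using (hasDerivAt_id x).neg.div_const 2
      exact h0.exp
    have h3 := HasDerivAt.const_mul (-2 : ℝ) (h1.mul h2)
    refine HasDerivAt.congr_deriv (f := F) h3 ?_
    field_simp
    ring
  have hFlim : Tendsto F atTop (𝓝 0) := by
    have h := (tendsto_rpow_mul_exp_neg_mul_atTop_nhds_zero (1/2) (1/2)
      (by norm_num)).const_mul (-2 : ℝ)
    rw [mul_zero] at h
    refine Tendsto.congr' ?_ h
    filter_upwards [eventually_gt_atTop (0:ℝ)] with x hx0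
    rw [hF]
    simp only
    rw [Real.sqrt_eq_rpow]
    congr 2
    ring
  have hF'int : IntegrableOn
      (fun x => Real.sqrt x * Real.exp (-x / 2) - Real.exp (-x / 2) / Real.sqrt x) (Ioi s) := by
    have heq : EqOn (fun x => Real.sqrt (2 * Real.pi) * (x * chiSq1Density x - chiSq1Density x))
        (fun x => Real.sqrt x * Real.exp (-x / 2) - Real.exp (-x / 2) / Real.sqrt x) (Ioi s) := by
      intro x hx
      have hx0 : (0:ℝ) < x := hs.trans hx
      have hsx : Real.sqrt x ≠ 0 := (Real.sqrt_pos.2 hx0).ne'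
      simp only
      rw [hxfx x hx, hfx x hx]
      field_simp
    exact MeasureTheory.IntegrableOn.congr_fun
      ((hInt_xf.sub hInt_f).const_mul _) heq measurableSet_Ioi
  have hFTC : (∫ x in Ioi s,
      (Real.sqrt x * Real.exp (-x / 2) - Real.exp (-x / 2) / Real.sqrt x)) = 0 - F s :=
    integral_Ioi_of_hasDerivAt_of_tendsto
      (Continuous.continuousWithinAt (by rw [hF]; fun_prop)) hderiv hF'int hFlim
  have hsub : (∫ x in Ioi s, (x * chiSq1Density x - chiSq1Density x))
      = 2 * Real.sqrt s * Real.exp (-s / 2) / Real.sqrt (2 * Real.pi) := by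
    have h1 : EqOn (fun x => x * chiSq1Density x - chiSq1Density x)
        (fun x => (Real.sqrt x * Real.exp (-x / 2) - Real.exp (-x / 2) / Real.sqrt x)
          * (Real.sqrt (2 * Real.pi))⁻¹) (Ioi s) := by
      intro x hx
      have hx0 : (0:ℝ) < x := hs.trans hx
      have hsx : Real.sqrt x ≠ 0 := (Real.sqrt_pos.2 hx0).ne'
      simp only
      rw [hxfx x hx, hfx x hx]
      field_simp
    rw [setIntegral_congr_fun measurableSet_Ioi h1, integral_mul_const, hFTC, hF]
    simp only
    rw [div_eq_mul_inv]
    ring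
  have hA : Real.sqrt (2 * s / Real.pi) = 2 * Real.sqrt s / Real.sqrt (2 * Real.pi) := by
    have hsq : (2 * Real.sqrt s / Real.sqrt (2 * Real.pi)) ^ 2 = 2 * s / Real.pi := by
      rw [div_pow, mul_pow, Real.sq_sqrt hs.le, Real.sq_sqrt hπ.le]
      field_simp
    rw [← hsq, Real.sqrt_sq (by positivity)]
  have conj1 : (∫ x in Ioi s, x * chiSq1Density x) =
      Real.sqrt (2 * s / Real.pi) * Real.exp (-s / 2) + ∫ x in Ioi s, chiSq1Density x := by
    have h := hsub
    rw [integral_sub hInt_xf hInt_f] at h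
    rw [hA]
    rw [div_mul_eq_mul_div]
    linarith [h]
  -- positivity of the denominator integral
  have hdens_pos : ∀ x : ℝ, 0 < x → 0 < chiSq1Density x := by
    intro x hx0; rw [chiSq1Density]; positivity
  have hfnn : 0 ≤ᵐ[volume.restrict (Ioi s)] chiSq1Density := by
    filter_upwards [ae_restrict_mem measurableSet_Ioi] with x hx
    exact (hdens_pos x (hs.trans hx)).le
  have hIpos : 0 < ∫ x in Ioi s, chiSq1Density x := by
    rw [setIntegral_pos_iff_support_of_nonneg_ae hfnn hInt_f]
    refine lt_of_lt_of_le ?_ (measure_mono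
      (fun x hx => ⟨(hdens_pos x (hs.trans hx)).ne', hx⟩ :
        Ioi s ⊆ Function.support chiSq1Density ∩ Ioi s))
    simp [Real.volume_Ioi]
  -- part (ii) : identify the Y-integral
  have htrans : (∫ y in Ioi (0:ℝ), Real.sqrt (s / (s + y)) * (1 / 2 * Real.exp (-y / 2)))
      = ∫ x in Ioi s, Real.sqrt (s / x) * (1 / 2 * Real.exp (-(x - s) / 2)) := by
    have hmp : MeasurePreserving (fun y : ℝ => y + s) volume volume :=
      measurePreserving_add_right volume s
    have hemb : MeasurableEmbedding (fun y : ℝ => y + s) :=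
      (MeasurableEquiv.addRight s).measurableEmbedding
    have hpre : (fun y : ℝ => y + s) ⁻¹' (Ioi s) = Ioi 0 := by
      ext y; simp [lt_add_iff_pos_left]
    have h := hmp.setIntegral_preimage_emb hemb
      (fun x => Real.sqrt (s / x) * (1 / 2 * Real.exp (-(x - s) / 2))) (Ioi s)
    rw [hpre] at h
    rw [← h]
    refine setIntegral_congr_fun measurableSet_Ioi fun y hy => ?_
    show Real.sqrt (s / (s + y)) * (1 / 2 * Real.exp (-y / 2))
        = Real.sqrt (s / (y + s)) * (1 / 2 * Real.exp (-(y + s - s) / 2))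
    rw [add_comm s y, show -(y + s - s) / 2 = -y / 2 by ring]
  have hc : EqOn (fun x => Real.sqrt (s / x) * (1 / 2 * Real.exp (-(x - s) / 2)))
      (fun x => (Real.sqrt s * Real.exp (s / 2) * Real.sqrt (2 * Real.pi) / 2)
        * chiSq1Density x) (Ioi s) := by
    intro x hx
    have hx0 : (0:ℝ) < x := hs.trans hx
    have hsx : Real.sqrt x ≠ 0 := (Real.sqrt_pos.2 hx0).ne'
    simp only
    rw [hfx x hx, Real.sqrt_div hs.le, show (-(x - s) / 2 : ℝ) = s / 2 + -x / 2 by ring,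
      Real.exp_add]
    field_simp
  have hY : (∫ y in Ioi (0:ℝ), Real.sqrt (s / (s + y)) * (1 / 2 * Real.exp (-y / 2)))
      = (Real.sqrt s * Real.exp (s / 2) * Real.sqrt (2 * Real.pi) / 2)
        * ∫ x in Ioi s, chiSq1Density x := by
    rw [htrans, setIntegral_congr_fun measurableSet_Ioi hc, integral_const_mul]
  have hAc : s / (Real.sqrt s * Real.exp (s / 2) * Real.sqrt (2 * Real.pi) / 2)
      = Real.sqrt (2 * s / Real.pi) * Real.exp (-s / 2) := by
    have h1 : Real.sqrt s * Real.sqrt s = s := Real.mul_self_sqrt hs.le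
    have h2 : Real.exp (s / 2) * Real.exp (-s / 2) = 1 := by
      rw [← Real.exp_add, show s / 2 + -s / 2 = 0 by ring, Real.exp_zero]
    have hss : Real.sqrt s ≠ 0 := (Real.sqrt_pos.2 hs).ne'
    rw [hA, div_eq_iff (by positivity : (Real.sqrt s * Real.exp (s / 2)
      * Real.sqrt (2 * Real.pi) / 2) ≠ 0)]
    field_simp
    rw [neg_div] at h2
    linear_combination (-(Real.exp (s / 2) * Real.exp (-(s / 2)))) * h1
      + (-s) * h2
  have conj2 : (∫ x in Ioi s, x * chiSq1Density x) / (∫ x in Ioi s, chiSq1Density x)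
      = s / (∫ y in Ioi (0:ℝ), Real.sqrt (s / (s + y)) * (1 / 2 * Real.exp (-y / 2))) + 1 := by
    rw [hY, ← div_div, hAc, conj1, add_div, div_self hIpos.ne']
  -- part (iii)
  have hsubfun : (fun x => (x - s) * chiSq1Density x)
      = fun x => x * chiSq1Density x - s * chiSq1Density x := funext fun x => by ring
  have hsub2 : IntegrableOn (fun x => (x - s) * chiSq1Density x) (Ioi s) := by
    rw [hsubfun]; exact hInt_xf.sub (hInt_f.const_mul s)
  have hpos2 : 0 < ∫ x in Ioi s, (x - s) * chiSq1Density x := by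
    rw [setIntegral_pos_iff_support_of_nonneg_ae ?_ hsub2]
    · refine lt_of_lt_of_le ?_ (measure_mono (fun x hx =>
        ⟨(mul_pos (sub_pos.2 hx) (hdens_pos x (hs.trans hx))).ne', hx⟩ :
        Ioi s ⊆ Function.support (fun x => (x - s) * chiSq1Density x) ∩ Ioi s))
      simp [Real.volume_Ioi]
    · filter_upwards [ae_restrict_mem measurableSet_Ioi] with x hx
      exact mul_nonneg (sub_nonneg.2 (le_of_lt hx)) (hdens_pos x (hs.trans hx)).le
  have hlt : s * (∫ x in Ioi s, chiSq1Density x) < ∫ x in Ioi s, x * chiSq1Density x := by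
    have h := hpos2
    rw [hsubfun, integral_sub hInt_xf (hInt_f.const_mul s), integral_const_mul] at h
    linarith
  exact ⟨conj1, conj2, (lt_div_iff₀ hIpos).mpr hlt⟩
end

section
/- Let X² be a χ²₁ random variable and define g(s) = E(X² | X² > s) for s > 0. Then for every s₀ > 0 there exists a constant C > 0 (depending only on s₀) such that for all s₁, s₂ ≥ s₀, |g(s₁) − g(s₂)| ≤ C·|s₁ − s₂|; that is, the conditional mean s ↦ E(X² | X² > s) is locally Lipschitz on any interval bounded away from zero. -/
open MeasureTheory Set Real Filter

/-- The conditional mean `g(s) = E(X² | X² > s)` of a χ²₁ random variable above level `s`. -/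
noncomputable def chiSq1CondMean (s : ℝ) : ℝ :=
  (∫ x in Set.Ioi s, x * chiSq1Density x) / (∫ x in Set.Ioi s, chiSq1Density x)

namespace ChiSqAux

lemma f_nonneg (x : ℝ) : 0 ≤ chiSq1Density x :=
  div_nonneg (Real.exp_nonneg _) (Real.sqrt_nonneg _)

lemma f_pos {x : ℝ} (hx : 0 < x) : 0 < chiSq1Density x :=
  div_pos (Real.exp_pos _) (Real.sqrt_pos.2 (by positivity))

lemma f_meas : Measurable chiSq1Density :=
  (Real.measurable_exp.comp (measurable_id.neg.div_const 2)).div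
    (Real.continuous_sqrt.measurable.comp (measurable_id.const_mul (2 * Real.pi)))

lemma f_contAt {x : ℝ} (hx : 0 < x) : ContinuousAt chiSq1Density x := by
  apply ContinuousAt.div
  · exact (Real.continuous_exp.comp (by continuity)).continuousAt
  · exact (Real.continuous_sqrt.comp (by continuity)).continuousAt
  · exact (Real.sqrt_pos.2 (by positivity)).ne'

lemma f_le {a x : ℝ} (ha : 0 < a) (hx : a ≤ x) :
    chiSq1Density x ≤ Real.exp (-x / 2) / Real.sqrt (2 * Real.pi * a) := by
  apply div_le_div_of_nonneg_left (Real.exp_nonneg _) (Real.sqrt_pos.2 (by positivity))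
  exact Real.sqrt_le_sqrt (by nlinarith [Real.pi_pos])

lemma f_anti {x y : ℝ} (hx : 0 < x) (hxy : x ≤ y) : chiSq1Density y ≤ chiSq1Density x := by
  apply div_le_div₀ (Real.exp_nonneg _) (Real.exp_le_exp.2 (by linarith))
    (Real.sqrt_pos.2 (by positivity))
  exact Real.sqrt_le_sqrt (by nlinarith [Real.pi_pos])

lemma integrable_f {a : ℝ} (ha : 0 < a) : IntegrableOn chiSq1Density (Ioi a) := by
  apply Integrable.mono' ((exp_neg_integrableOn_Ioi a (by norm_num : (0:ℝ) < 1/2)).const_mul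
    (1 / Real.sqrt (2 * Real.pi * a))) f_meas.aestronglyMeasurable.restrict
  filter_upwards [ae_restrict_mem measurableSet_Ioi] with x hx
  rw [Real.norm_eq_abs, abs_of_nonneg (f_nonneg x)]
  calc chiSq1Density x ≤ Real.exp (-x / 2) / Real.sqrt (2 * Real.pi * a) :=
        f_le ha (le_of_lt hx)
    _ = 1 / Real.sqrt (2 * Real.pi * a) * Real.exp (-(1/2) * x) := by
        rw [div_eq_mul_inv, mul_comm]; ring_nf

lemma xexp_le {x : ℝ} (hx : 0 ≤ x) : x * Real.exp (-x / 2) ≤ 4 * Real.exp (-x / 4) := by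
  have h : x / 4 ≤ Real.exp (x / 4) := le_trans (by linarith) (Real.add_one_le_exp _)
  have h2 : x ≤ 4 * Real.exp (x / 4) := by linarith
  calc x * Real.exp (-x / 2) ≤ 4 * Real.exp (x / 4) * Real.exp (-x / 2) :=
        mul_le_mul_of_nonneg_right h2 (Real.exp_nonneg _)
    _ = 4 * Real.exp (-x / 4) := by rw [mul_assoc, ← Real.exp_add]; ring_nf

lemma integrable_xf {a : ℝ} (ha : 0 < a) :
    IntegrableOn (fun x => x * chiSq1Density x) (Ioi a) := by
  apply Integrable.mono' ((exp_neg_integrableOn_Ioi a (by norm_num : (0:ℝ) < 1/4)).const_mul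
    (4 / Real.sqrt (2 * Real.pi * a)))
    ((measurable_id.mul f_meas).aestronglyMeasurable.restrict)
  filter_upwards [ae_restrict_mem measurableSet_Ioi] with x hx
  have hx0 : (0:ℝ) < x := lt_trans ha hx
  simp only [Pi.mul_apply, id, Function.comp]
  rw [Real.norm_eq_abs, abs_of_nonneg (mul_nonneg hx0.le (f_nonneg x))]
  have hs : 0 < Real.sqrt (2 * Real.pi * a) := Real.sqrt_pos.2 (by positivity)
  calc x * chiSq1Density x ≤ x * (Real.exp (-x / 2) / Real.sqrt (2 * Real.pi * a)) :=
        mul_le_mul_of_nonneg_left (f_le ha hx.le) hx0.le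
    _ = x * Real.exp (-x / 2) / Real.sqrt (2 * Real.pi * a) := by ring
    _ ≤ 4 * Real.exp (-x / 4) / Real.sqrt (2 * Real.pi * a) := by
        have := xexp_le hx0.le; gcongr
    _ = 4 / Real.sqrt (2 * Real.pi * a) * Real.exp (-(1/4) * x) := by ring_nf

lemma integrable_xexp {s : ℝ} (hs : 0 < s) :
    IntegrableOn (fun x => x * Real.exp (-x / 2)) (Ioi s) := by
  apply Integrable.mono' ((exp_neg_integrableOn_Ioi s (by norm_num : (0:ℝ) < 1/4)).const_mul 4)
    ((measurable_id.mul (Real.measurable_exp.comp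
      (measurable_id.neg.div_const 2))).aestronglyMeasurable.restrict)
  filter_upwards [ae_restrict_mem measurableSet_Ioi] with x hx
  have hx0 : (0:ℝ) < x := lt_trans hs hx
  simp only [Pi.mul_apply, Pi.neg_apply, id, Function.comp]
  rw [Real.norm_eq_abs, abs_of_nonneg (mul_nonneg hx0.le (Real.exp_nonneg _))]
  have h : x / 4 ≤ Real.exp (x / 4) := le_trans (by linarith) (Real.add_one_le_exp _)
  calc x * Real.exp (-x / 2) ≤ 4 * Real.exp (x / 4) * Real.exp (-x / 2) := by
        apply mul_le_mul_of_nonneg_right (by linarith) (Real.exp_nonneg _)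
    _ = 4 * Real.exp (-(1/4) * x) := by rw [mul_assoc, ← Real.exp_add]; ring_nf

lemma integrable_exp_shift {s : ℝ} (hs : 0 < s) :
    IntegrableOn (fun x => (x - s) * Real.exp (-x / 2)) (Ioi s) := by
  have h2 : IntegrableOn (fun x => s * Real.exp (-x / 2)) (Ioi s) := by
    simpa [IntegrableOn, mul_comm, neg_div, div_eq_mul_inv, mul_comm (2:ℝ)⁻¹, ← neg_mul] using
      ((exp_neg_integrableOn_Ioi s (by norm_num : (0:ℝ) < 1/2)).const_mul s)
  have := (integrable_xexp hs).sub h2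
  simpa [sub_mul, Pi.sub_def] using this

lemma key_exp_integral {s : ℝ} (hs : 0 < s) :
    ∫ x in Ioi s, (x - s) * Real.exp (-x / 2) = 4 * Real.exp (-s / 2) := by
  have hderiv : ∀ x ∈ Ici s, HasDerivAt (fun x => -(2 * (x - s) + 4) * Real.exp (-x / 2))
      ((x - s) * Real.exp (-x / 2)) x := by
    intro x _
    have h1 : HasDerivAt (fun x : ℝ => -x / 2) (-1/2) x := by
      simpa using ((hasDerivAt_id x).neg.div_const 2)
    have he : HasDerivAt (fun x : ℝ => Real.exp (-x / 2)) (Real.exp (-x/2) * (-1/2)) x :=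
      (Real.hasDerivAt_exp _).comp x h1
    have hp : HasDerivAt (fun x : ℝ => -(2 * (x - s) + 4)) (-2) x := by
      exact ((((hasDerivAt_id x).sub_const s).const_mul 2).add_const 4).neg.congr_deriv (by ring)
    exact (hp.mul he).congr_deriv (by ring)
  have htend : Tendsto (fun x => -(2 * (x - s) + 4) * Real.exp (-x / 2)) atTop (nhds 0) := by
    have h1 : Tendsto (fun x : ℝ => x * Real.exp (-(1/2) * x)) atTop (nhds 0) := by
      have := tendsto_rpow_mul_exp_neg_mul_atTop_nhds_zero 1 (1/2) (by norm_num)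
      apply this.congr'
      filter_upwards [eventually_gt_atTop (0:ℝ)] with x hx
      rw [Real.rpow_one]
    have h2 : Tendsto (fun x : ℝ => Real.exp (-(1/2) * x)) atTop (nhds 0) := by
      have : Tendsto (fun x : ℝ => x / 2) atTop atTop := tendsto_id.atTop_div_const two_pos
      have := Real.tendsto_exp_neg_atTop_nhds_zero.comp this
      apply this.congr (fun x => by simp [Function.comp]; ring_nf)
    have := (h1.const_mul (-2)).add (h2.const_mul (2*s - 4))
    simp only [mul_zero, add_zero] at this
    apply this.congr (fun x => by rw [show -(1/2)*x = -x/2 by ring]; ring)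
  have := integral_Ioi_of_hasDerivAt_of_tendsto' hderiv (integrable_exp_shift hs) htend
  rw [this]
  simp

lemma hasDerivAt_integral_Ioi {h : ℝ → ℝ} {b s : ℝ} (hb : 0 < b) (hbs : b < s)
    (hint : ∀ a, 0 < a → IntegrableOn h (Ioi a)) (hcont : ContinuousAt h s)
    (hmeas : Measurable h) :
    HasDerivAt (fun u => ∫ x in Ioi u, h x) (-(h s)) s := by
  have key : ∀ u, b < u → (∫ x in Ioi u, h x) = (∫ x in Ioi b, h x) - ∫ x in b..u, h x := by
    intro u hu
    rw [intervalIntegral.integral_of_le hu.le]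
    rw [show Ioi b = Ioc b u ∪ Ioi u from (Ioc_union_Ioi_eq_Ioi hu.le).symm,
      setIntegral_union (Ioc_disjoint_Ioi le_rfl) measurableSet_Ioi
        ((hint b hb).mono_set Ioc_subset_Ioi_self) ((hint u (hb.trans hu)))]
    ring
  have hii : IntervalIntegrable h volume b s :=
    (intervalIntegrable_iff_integrableOn_Ioc_of_le hbs.le).mpr
      ((hint b hb).mono_set Ioc_subset_Ioi_self)
  have hd := intervalIntegral.integral_hasDerivAt_right hii
    (hmeas.stronglyMeasurable.stronglyMeasurableAtFilter) hcont
  have hd2 : HasDerivAt (fun u => (∫ x in Ioi b, h x) - ∫ x in b..u, h x) (-(h s)) s :=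
    hd.const_sub _
  apply hd2.congr_of_eventuallyEq
  filter_upwards [eventually_gt_nhds hbs] with u hu
  exact key u hu

lemma F_lower {s : ℝ} (hs : 0 < s) :
    chiSq1Density (s + 1) ≤ ∫ x in Ioi s, chiSq1Density x := by
  have h1 : chiSq1Density (s + 1) ≤ ∫ x in Ioc s (s+1), chiSq1Density x := by
    have hconst : (∫ _x in Ioc s (s+1), chiSq1Density (s+1)) = chiSq1Density (s+1) := by
      rw [setIntegral_const]
      simp [Real.volume_Ioc]
    rw [← hconst]
    apply setIntegral_mono_on
    · exact integrableOn_const (by simp [Real.volume_Ioc])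
    · exact (integrable_f hs).mono_set Ioc_subset_Ioi_self
    · exact measurableSet_Ioc
    · intro x hx
      exact f_anti (hs.trans hx.1) hx.2
  refine h1.trans (setIntegral_mono_set (integrable_f hs)
    (Eventually.of_forall fun x => f_nonneg x) (HasSubset.Subset.eventuallyLE Ioc_subset_Ioi_self))

lemma F_pos {s : ℝ} (hs : 0 < s) : 0 < ∫ x in Ioi s, chiSq1Density x :=
  lt_of_lt_of_le (f_pos (by linarith)) (F_lower hs)

lemma N_sub_sF {s : ℝ} (hs : 0 < s) :
    (∫ x in Ioi s, x * chiSq1Density x) - s * (∫ x in Ioi s, chiSq1Density x)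
      = ∫ x in Ioi s, (x - s) * chiSq1Density x := by
  rw [← integral_const_mul, ← integral_sub (integrable_xf hs) ((integrable_f hs).const_mul s)]
  simp [sub_mul]

lemma shift_nonneg {s : ℝ} (hs : 0 < s) :
    0 ≤ ∫ x in Ioi s, (x - s) * chiSq1Density x := by
  apply setIntegral_nonneg measurableSet_Ioi
  intro x hx
  exact mul_nonneg (by simp at hx; linarith) (f_nonneg x)

lemma shift_le {s : ℝ} (hs : 0 < s) :
    (∫ x in Ioi s, (x - s) * chiSq1Density x) ≤ 4 * chiSq1Density s := by
  have hint1 : IntegrableOn (fun x => (x - s) * chiSq1Density x) (Ioi s) := by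
    have := (integrable_xf hs).sub ((integrable_f hs).const_mul s)
    simpa [sub_mul, Pi.sub_def] using this
  have hint2 : IntegrableOn
      (fun x => (x - s) * Real.exp (-x / 2) * (1 / Real.sqrt (2 * Real.pi * s))) (Ioi s) :=
    (integrable_exp_shift hs).mul_const _
  have h1 : (∫ x in Ioi s, (x - s) * chiSq1Density x)
      ≤ ∫ x in Ioi s, (x - s) * Real.exp (-x / 2) * (1 / Real.sqrt (2 * Real.pi * s)) := by
    apply setIntegral_mono_on hint1 hint2 measurableSet_Ioi
    intro x hx
    simp only [mem_Ioi] at hx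
    have := f_le hs hx.le
    calc (x - s) * chiSq1Density x
        ≤ (x - s) * (Real.exp (-x / 2) / Real.sqrt (2 * Real.pi * s)) :=
          mul_le_mul_of_nonneg_left this (by linarith)
      _ = (x - s) * Real.exp (-x / 2) * (1 / Real.sqrt (2 * Real.pi * s)) := by ring
  rw [integral_mul_const, key_exp_integral hs] at h1
  refine h1.trans_eq ?_
  unfold chiSq1Density
  ring

lemma f_sq {s : ℝ} (hs : 0 < s) :
    chiSq1Density s ^ 2 = Real.exp (-s) / (2 * Real.pi * s) := by
  unfold chiSq1Density
  rw [div_pow, Real.sq_sqrt (by positivity), sq, ← Real.exp_add]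
  ring_nf

lemma fsq_ratio {s₀ s : ℝ} (hs₀ : 0 < s₀) (hs : s₀ ≤ s) :
    4 * chiSq1Density s ^ 2 ≤ (4 * Real.exp 1 * (1 + 1 / s₀)) * chiSq1Density (s + 1) ^ 2 := by
  have hs0 : 0 < s := hs₀.trans_le hs
  rw [f_sq hs0, f_sq (by linarith)]
  rw [show Real.exp (-s) = Real.exp 1 * Real.exp (-(s+1)) by rw [← Real.exp_add]; ring_nf]
  have hpi := Real.pi_pos
  have hE := Real.exp_pos (1:ℝ)
  have hX := Real.exp_pos (-(s+1))
  rw [show (4:ℝ) * (Real.exp 1 * Real.exp (-(s+1)) / (2*Real.pi*s))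
      = 4 * Real.exp 1 * Real.exp (-(s+1)) / (2*Real.pi*s) from by ring,
    show 4 * Real.exp 1 * (1+1/s₀) * (Real.exp (-(s+1)) / (2*Real.pi*(s+1)))
      = 4 * Real.exp 1 * (1+1/s₀) * Real.exp (-(s+1)) / (2*Real.pi*(s+1)) from by ring,
    div_le_div_iff₀ (by positivity) (by positivity)]
  have key : s + 1 ≤ (1 + 1/s₀) * s := by
    have h1 : 1 ≤ s / s₀ := (one_le_div hs₀).2 hs
    have h2 : (1 + 1/s₀) * s = s + s / s₀ := by ring
    rw [h2]; linarith
  nlinarith [mul_nonneg (by positivity : (0:ℝ) ≤ 8*Real.pi*Real.exp 1*Real.exp (-(s+1)))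
    (sub_nonneg.2 key)]

lemma hasDeriv_cond {s₀ s : ℝ} (hs₀ : 0 < s₀) (hs : s₀ ≤ s) :
    HasDerivAt chiSq1CondMean
      (chiSq1Density s * ((∫ x in Ioi s, x * chiSq1Density x)
        - s * ∫ x in Ioi s, chiSq1Density x) / (∫ x in Ioi s, chiSq1Density x) ^ 2) s := by
  have hs0 : 0 < s := hs₀.trans_le hs
  have hbs : s₀ / 2 < s := by linarith
  have hF' : HasDerivAt (fun u => ∫ x in Ioi u, chiSq1Density x) (-(chiSq1Density s)) s :=
    hasDerivAt_integral_Ioi (by linarith) hbs (fun a ha => integrable_f ha)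
      (f_contAt hs0) f_meas
  have hN' : HasDerivAt (fun u => ∫ x in Ioi u, x * chiSq1Density x)
      (-(s * chiSq1Density s)) s :=
    hasDerivAt_integral_Ioi (by linarith) hbs (fun a ha => integrable_xf ha)
      (continuousAt_id.mul (f_contAt hs0)) (measurable_id.mul f_meas)
  have hFne : (∫ x in Ioi s, chiSq1Density x) ≠ 0 := (F_pos hs0).ne'
  have hgd := hN'.div hF' hFne
  exact hgd.congr_deriv (by ring)

lemma bound_abstract {C s F N fs f1 : ℝ} (hfs : 0 ≤ fs) (h0 : 0 ≤ N - s * F)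
    (h4 : N - s * F ≤ 4 * fs) (hf1 : 0 < f1) (hFl : f1 ≤ F)
    (hratio : 4 * fs ^ 2 ≤ C * f1 ^ 2) :
    |fs * (N - s * F) / F ^ 2| ≤ C := by
  rw [abs_of_nonneg (div_nonneg (mul_nonneg hfs h0) (sq_nonneg _))]
  calc fs * (N - s * F) / F ^ 2
      ≤ fs * (4 * fs) / F ^ 2 := by gcongr
    _ ≤ fs * (4 * fs) / f1 ^ 2 := by gcongr
    _ = 4 * fs ^ 2 / f1 ^ 2 := by ring
    _ ≤ C := by
        rw [div_le_iff₀ (by positivity)]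
        exact hratio

lemma bound_cond {s₀ s : ℝ} (hs₀ : 0 < s₀) (hs : s₀ ≤ s) :
    ‖chiSq1Density s * ((∫ x in Ioi s, x * chiSq1Density x)
        - s * ∫ x in Ioi s, chiSq1Density x) / (∫ x in Ioi s, chiSq1Density x) ^ 2‖
      ≤ 4 * Real.exp 1 * (1 + 1 / s₀) := by
  have hs0 : 0 < s := hs₀.trans_le hs
  have h0 : 0 ≤ (∫ x in Ioi s, x * chiSq1Density x) - s * ∫ x in Ioi s, chiSq1Density x := by
    rw [N_sub_sF hs0]; exact shift_nonneg hs0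
  have h4 : (∫ x in Ioi s, x * chiSq1Density x) - s * (∫ x in Ioi s, chiSq1Density x)
      ≤ 4 * chiSq1Density s := by
    rw [N_sub_sF hs0]; exact shift_le hs0
  rw [Real.norm_eq_abs]
  exact bound_abstract (f_nonneg s) h0 h4 (f_pos (by linarith)) (F_lower hs0)
    (fsq_ratio hs₀ hs)

end ChiSqAux

open ChiSqAux in
/-- **Local Lipschitz continuity of the conditional mean.**  For every `s₀ > 0` there is a
constant `C > 0` (depending only on `s₀`) such that for all `s₁, s₂ ≥ s₀`,
`|E(X² | X² > s₁) − E(X² | X² > s₂)| ≤ C |s₁ − s₂|`. -/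
theorem chiSq1CondMean_locally_lipschitz (s₀ : ℝ) (hs₀ : 0 < s₀) :
    ∃ C : ℝ, 0 < C ∧
      ∀ s₁ s₂ : ℝ, s₀ ≤ s₁ → s₀ ≤ s₂ →
        |chiSq1CondMean s₁ - chiSq1CondMean s₂| ≤ C * |s₁ - s₂| := by
  refine ⟨4 * Real.exp 1 * (1 + 1 / s₀), by positivity, ?_⟩
  intro s₁ s₂ h1 h2
  have hderiv : ∀ s ∈ Ici s₀, HasDerivWithinAt chiSq1CondMean
      (chiSq1Density s * ((∫ x in Ioi s, x * chiSq1Density x)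
        - s * ∫ x in Ioi s, chiSq1Density x) / (∫ x in Ioi s, chiSq1Density x) ^ 2)
      (Ici s₀) s :=
    fun s hs => (hasDeriv_cond hs₀ hs).hasDerivWithinAt
  have hbound : ∀ s ∈ Ici s₀,
      ‖chiSq1Density s * ((∫ x in Ioi s, x * chiSq1Density x)
        - s * ∫ x in Ioi s, chiSq1Density x) / (∫ x in Ioi s, chiSq1Density x) ^ 2‖
      ≤ 4 * Real.exp 1 * (1 + 1 / s₀) :=
    fun s hs => bound_cond hs₀ hs
  have := Convex.norm_image_sub_le_of_norm_hasDerivWithin_le hderiv hbound (convex_Ici s₀) h2 h1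
  simpa [Real.norm_eq_abs] using this
end
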